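/- Let C be a coalgebra over a field k and let π : C → C/I₁(C) be the quotient linear map. Then the strong-cocommutativity identities hold: for every x ∈ C, (π ⊗ id_C)(Δ(x)) = (π ⊗ id_C)(τ(Δ(x))), where τ : C ⊗ C → C ⊗ C is the flip; in Sweedler notation, x̄₁ ⊗ x₂ = x̄₂ ⊗ x₁ in (C/I₁(C)) ⊗ C, where x̄ denotes the class of x modulo I₁(C). -/

import Mathlib

open TensorProduct

/-- `I₁(C)`: the subspace of a coalgebra `C` spanned by the elements
`φ(x₁)·x₂ − φ(x₂)·x₁` for `x ∈ C` and linear forms `φ : C → k`. -/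
noncomputable def lazySubspace (k : Type*) [Field k] (C : Type*)
    [AddCommGroup C] [Module k C] [Coalgebra k C] : Submodule k C :=
  Submodule.span k {y : C | ∃ (x : C) (φ : C →ₗ[k] k),
    y = (TensorProduct.lid k C)
          (TensorProduct.map φ LinearMap.id (Coalgebra.comul x))
      - (TensorProduct.rid k C)
          (TensorProduct.map LinearMap.id φ (Coalgebra.comul x))}

/-- Over a field, two elements of `Q ⊗ C` are equal as soon as all contractions
against linear forms on the right factor agree. -/
lemma eq_of_forall_lTensor (k : Type*) [Field k] {Q C : Type*}
    [AddCommGroup Q] [Module k Q] [AddCommGroup C] [Module k C]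
    {t₁ t₂ : Q ⊗[k] C}
    (h : ∀ ψ : C →ₗ[k] k, LinearMap.lTensor Q ψ t₁ = LinearMap.lTensor Q ψ t₂) :
    t₁ = t₂ := by
  classical
  let b := Module.Basis.ofVectorSpace k C
  apply (LinearEquiv.lTensor Q b.repr).injective
  apply (TensorProduct.finsuppScalarRight k k Q _).injective
  ext i
  rw [TensorProduct.finsuppScalarRight_apply, TensorProduct.finsuppScalarRight_apply]
  have hco : ∀ t : Q ⊗[k] C,
      (Finsupp.lapply i).lTensor Q ((LinearEquiv.lTensor Q b.repr) t)
        = LinearMap.lTensor Q ((Finsupp.lapply i) ∘ₗ (b.repr : C →ₗ[k] _)) t := by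
    intro t
    induction t using TensorProduct.induction_on with
    | zero => simp
    | tmul q c => simp
    | add u v hu hv => simp [map_add, hu, hv]
  rw [hco, hco, h ((Finsupp.lapply i) ∘ₗ (b.repr : C →ₗ[k] _))]

/-- the strong-cocommutativity identities: for the projection
`π : C → C/I₁(C)` and every `x ∈ C`, one has
`(π ⊗ id)(Δ(x)) = (π ⊗ id)(τ(Δ(x)))`, i.e. `x̄₁ ⊗ x₂ = x̄₂ ⊗ x₁`. -/
theorem strong_cocommutativity (k : Type*) [Field k] (C : Type*)
    [AddCommGroup C] [Module k C] [Coalgebra k C] :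
    ∀ x : C,
      TensorProduct.map (lazySubspace k C).mkQ (LinearMap.id : C →ₗ[k] C)
          (Coalgebra.comul (R := k) x)
        = TensorProduct.map (lazySubspace k C).mkQ (LinearMap.id : C →ₗ[k] C)
            ((TensorProduct.comm k C C) (Coalgebra.comul (R := k) x)) := by
  intro x
  set I := lazySubspace k C
  set π := I.mkQ
  apply eq_of_forall_lTensor k
  intro ψ
  -- rewrite both sides through `rTensor π`
  have h1 : ∀ t : C ⊗[k] C,
      LinearMap.lTensor (C ⧸ I) ψ
          (TensorProduct.map π (LinearMap.id : C →ₗ[k] C) t)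
        = LinearMap.rTensor k π (TensorProduct.map LinearMap.id ψ t) := by
    intro t
    induction t using TensorProduct.induction_on with
    | zero => simp
    | tmul a c => simp
    | add u v hu hv => simp [map_add, hu, hv]
  rw [h1, h1]
  apply (TensorProduct.rid k (C ⧸ I)).injective
  have h3 : ∀ u : C ⊗[k] k,
      (TensorProduct.rid k (C ⧸ I)) (LinearMap.rTensor k π u)
        = π ((TensorProduct.rid k C) u) := by
    intro u
    induction u using TensorProduct.induction_on with
    | zero => simp
    | tmul a c => simp
    | add u v hu hv => simp [map_add, hu, hv]
  rw [h3, h3]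
  have h2 : (TensorProduct.rid k C)
      (TensorProduct.map LinearMap.id ψ
        ((TensorProduct.comm k C C) (Coalgebra.comul (R := k) x)))
      = (TensorProduct.lid k C)
          (TensorProduct.map ψ LinearMap.id (Coalgebra.comul (R := k) x)) := by
    induction (Coalgebra.comul (R := k) x) using TensorProduct.induction_on with
    | zero => simp
    | tmul a c => simp [TensorProduct.smul_tmul']
    | add u v hu hv => simp [map_add, hu, hv]
  rw [h2]
  -- now reduce to membership in I₁
  show Submodule.Quotient.mk _ = Submodule.Quotient.mk _
  rw [Submodule.Quotient.eq]
  have : (TensorProduct.lid k C)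
        (TensorProduct.map ψ LinearMap.id (Coalgebra.comul (R := k) x))
      - (TensorProduct.rid k C)
        (TensorProduct.map LinearMap.id ψ (Coalgebra.comul (R := k) x)) ∈ I := by
    apply Submodule.subset_span
    exact ⟨x, ψ, rfl⟩
  simpa using I.neg_mem this
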